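/- Dual value identity for the best case: Let s₁, …, s_N ∈ ℝⁿ with sample mean s̄ and empirical covariance Σ, let φ ∈ ℝⁿ with φ ≠ 0, δ > 0, and let α ∈ ℝ satisfy C² ≤ δ·‖φ‖₂² where C := α − φ·s̄. For λ₁ ≥ 0 and λ₂ ∈ ℝ define Φ_{λ₁,λ₂}(r) = sup_{u ∈ ℝⁿ} [ −(φ·u)² − λ₁·‖u − r‖₂² − λ₂·(φ·u) ]. Then inf_{λ₁ ≥ 0, λ₂ ∈ ℝ} [ λ₁δ + λ₂α + (1/N)·Σ_{i=1}^N Φ_{λ₁,λ₂}(s_i) ] = −α² − max(√(φᵀΣφ) − √(δ·‖φ‖₂² − C²), 0)². -/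

import Mathlib

open scoped BigOperators

/-- Euclidean dot product on `Fin n → ℝ`. -/
noncomputable def eDot {n : ℕ} (a b : Fin n → ℝ) : ℝ := ∑ i, a i * b i

lemma phi_isGreatest {n : ℕ} (φ : Fin n → ℝ) (hns : 0 < ∑ i, φ i ^ 2)
    (m : ℝ) (hm : 0 ≤ m) (l₂ : ℝ) (r : Fin n → ℝ) :
    IsGreatest { y | ∃ u : Fin n → ℝ,
        y = -(eDot φ u) ^ 2 - (m * ∑ i, φ i ^ 2) * (∑ i, (u i - r i) ^ 2) - l₂ * eDot φ u }
      ((2*m*(eDot φ r) - l₂)^2/(4*(1+m)) - m*(eDot φ r)^2) := by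
  set nsq : ℝ := ∑ i, φ i ^ 2 with hnsq
  set t0 : ℝ := eDot φ r with ht0
  have hm1 : (0:ℝ) < 1 + m := by linarith
  set tstar : ℝ := (2*m*t0 - l₂)/(2*(1+m)) with htstar
  set c : ℝ := (tstar - t0)/nsq with hc
  constructor
  · refine ⟨fun i => r i + c * φ i, ?_⟩
    have hφu : eDot φ (fun i => r i + c * φ i) = t0 + c * nsq := by
      simp only [eDot, mul_add]
      rw [Finset.sum_add_distrib]
      congr 1
      rw [Finset.mul_sum]
      exact Finset.sum_congr rfl fun i _ => by ring
    have hq : (∑ i, ((r i + c * φ i) - r i) ^ 2) = c^2 * nsq := by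
      rw [Finset.mul_sum]
      exact Finset.sum_congr rfl fun i _ => by ring
    rw [hφu, hq]
    have hcn : c * nsq = tstar - t0 := by
      rw [hc]; field_simp
    have h1 : t0 + c * nsq = tstar := by rw [hcn]; ring
    have h2 : (m * nsq) * (c^2 * nsq) = m * (tstar - t0)^2 := by
      have : c^2 * nsq * nsq = (tstar - t0)^2 := by
        rw [hc]; field_simp
      nlinarith [this]
    rw [h1]
    rw [show (m * nsq) * (c^2 * nsq) = m * nsq * (c^2 * nsq) by ring, h2]
    rw [htstar]
    field_simp
    ring
  · rintro y ⟨u, rfl⟩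
    set t : ℝ := eDot φ u with ht
    set q : ℝ := ∑ i, (u i - r i) ^ 2 with hqdef
    have hq0 : 0 ≤ q := Finset.sum_nonneg fun i _ => sq_nonneg _
    have hcs : (t - t0)^2 ≤ nsq * q := by
      have h1 : t - t0 = ∑ i, φ i * (u i - r i) := by
        rw [ht, ht0]
        simp only [eDot]
        rw [← Finset.sum_sub_distrib]
        exact Finset.sum_congr rfl fun i _ => by ring
      rw [h1]
      calc (∑ i, φ i * (u i - r i))^2 ≤ (∑ i, φ i ^ 2) * ∑ i, (u i - r i)^2 :=
            Finset.sum_mul_sq_le_sq_mul_sq _ _ _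
        _ = nsq * q := rfl
    have key : -(t)^2 - m*(t-t0)^2 - l₂*t ≤ (2*m*t0 - l₂)^2/(4*(1+m)) - m*t0^2 := by
      have hdiff : ((2*m*t0 - l₂)^2/(4*(1+m)) - m*t0^2) - (-(t)^2 - m*(t-t0)^2 - l₂*t)
          = (2*(1+m)*t - 2*m*t0 + l₂)^2 / (4*(1+m)) := by
        field_simp
        ring
      have : 0 ≤ (2*(1+m)*t - 2*m*t0 + l₂)^2 / (4*(1+m)) :=
        div_nonneg (sq_nonneg _) (by linarith)
      linarith [hdiff ▸ this]
    have hmono : -(t)^2 - (m*nsq)*q - l₂*t ≤ -(t)^2 - m*(t-t0)^2 - l₂*t := by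
      have : m * (t-t0)^2 ≤ m * (nsq * q) := mul_le_mul_of_nonneg_left hcs hm
      nlinarith
    linarith


set_option maxHeartbeats 2000000 in
/-- **Dual value identity for the best case.**
With `s̄` the sample mean, `V = φᵀΣφ` the empirical variance, `C = α − φ·s̄`
satisfying `C² ≤ δ‖φ‖₂²`, and
`Φ_{λ₁,λ₂}(r) = sup_u [ −(φ·u)² − λ₁‖u − r‖₂² − λ₂(φ·u) ]`, the dual value
`inf_{λ₁ ≥ 0, λ₂} [ λ₁δ + λ₂α + (1/N)·Σᵢ Φ_{λ₁,λ₂}(sᵢ) ]` equals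
`−α² − max(√(φᵀΣφ) − √(δ‖φ‖₂² − C²), 0)²`. -/
theorem stmt_8 {n N : ℕ} (hN : 0 < N) (s : Fin N → (Fin n → ℝ))
    (φ : Fin n → ℝ) (hφ : φ ≠ 0) (δ : ℝ) (hδ : 0 < δ) (α : ℝ) :
    let sbar : Fin n → ℝ := fun j => (N : ℝ)⁻¹ * ∑ i, s i j
    let μbar : ℝ := eDot φ sbar
    let C : ℝ := α - μbar
    let V : ℝ := (N : ℝ)⁻¹ * ∑ i, (eDot φ (s i) - μbar) ^ 2
    let nsq : ℝ := ∑ i, φ i ^ 2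
    let Φ : ℝ → ℝ → (Fin n → ℝ) → ℝ := fun l₁ l₂ r =>
      sSup { y | ∃ u : Fin n → ℝ,
        y = -(eDot φ u) ^ 2 - l₁ * (∑ i, (u i - r i) ^ 2) - l₂ * eDot φ u }
    C ^ 2 ≤ δ * nsq →
    sInf { y | ∃ l₁ l₂ : ℝ, 0 ≤ l₁ ∧
        y = l₁ * δ + l₂ * α + (N : ℝ)⁻¹ * ∑ i, Φ l₁ l₂ (s i) }
      = -α ^ 2 - (max (Real.sqrt V - Real.sqrt (δ * nsq - C ^ 2)) 0) ^ 2 := by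
  intro sbar μbar C V nsq Φ hC
  have hN0 : (N:ℝ) ≠ 0 := Nat.cast_ne_zero.mpr hN.ne'
  have hNpos : (0:ℝ) < N := Nat.cast_pos.mpr hN
  have hns : (0:ℝ) < nsq := by
    obtain ⟨j, hj⟩ := Function.ne_iff.mp hφ
    exact Finset.sum_pos' (fun i _ => sq_nonneg _) ⟨j, Finset.mem_univ j, lt_of_le_of_ne (sq_nonneg _) (Ne.symm (pow_ne_zero 2 hj))⟩
  -- shorthand sums
  have hμ : μbar = (N:ℝ)⁻¹ * ∑ i, eDot φ (s i) := by
    show (∑ j, φ j * ((N:ℝ)⁻¹ * ∑ i, s i j)) = _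
    calc (∑ j, φ j * ((N:ℝ)⁻¹ * ∑ i, s i j))
        = ∑ j, ∑ i, (N:ℝ)⁻¹ * (φ j * s i j) := by
          refine Finset.sum_congr rfl fun j _ => ?_
          rw [Finset.mul_sum, Finset.mul_sum]
          exact Finset.sum_congr rfl fun i _ => by ring
      _ = ∑ i, ∑ j, (N:ℝ)⁻¹ * (φ j * s i j) := Finset.sum_comm
      _ = ∑ i, (N:ℝ)⁻¹ * eDot φ (s i) := by
          refine Finset.sum_congr rfl fun i _ => ?_
          rw [eDot, Finset.mul_sum]
      _ = (N:ℝ)⁻¹ * ∑ i, eDot φ (s i) := (Finset.mul_sum _ _ _).symm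
  have hVexp : (∑ i, (eDot φ (s i) - μbar)^2)
      = (∑ i, (eDot φ (s i))^2) - 2*μbar*(∑ i, eDot φ (s i)) + (N:ℝ)*μbar^2 := by
    calc (∑ i, (eDot φ (s i) - μbar)^2)
        = ∑ i, ((eDot φ (s i))^2 - 2*μbar*(eDot φ (s i)) + μbar^2) :=
          Finset.sum_congr rfl fun i _ => by ring
      _ = _ := by
          rw [Finset.sum_add_distrib, Finset.sum_sub_distrib, ← Finset.mul_sum,
            Finset.sum_const, Finset.card_univ, Fintype.card_fin, nsmul_eq_mul]
  have hCeq : C = α - (N:ℝ)⁻¹ * ∑ i, eDot φ (s i) := by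
    show α - μbar = _; rw [hμ]
  have hVeq : V = (N:ℝ)⁻¹ * ((∑ i, (eDot φ (s i))^2)
      - 2*((N:ℝ)⁻¹ * ∑ i, eDot φ (s i))*(∑ i, eDot φ (s i))
      + (N:ℝ)*((N:ℝ)⁻¹ * ∑ i, eDot φ (s i))^2) := by
    show (N:ℝ)⁻¹ * (∑ i, (eDot φ (s i) - μbar)^2) = _
    rw [hVexp, hμ]
  have hkey : ∀ m : ℝ, 0 ≤ m → ∀ l₂ : ℝ,
      (m*nsq)*δ + l₂*α + (N:ℝ)⁻¹ * ∑ i, Φ (m*nsq) l₂ (s i)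
      = -α^2 + m*(δ*nsq - C^2) - m*V/(1+m)
        + (l₂ - (2*m*μbar - 2*(1+m)*α))^2/(4*(1+m)) := by
    intro m hm l₂
    have h1m : (0:ℝ) < 1 + m := by linarith
    have hΦi : ∀ i ∈ Finset.univ, Φ (m*nsq) l₂ (s i)
        = (2*m*(eDot φ (s i)) - l₂)^2/(4*(1+m)) - m*(eDot φ (s i))^2 :=
      fun i _ => (phi_isGreatest φ hns m hm l₂ (s i)).csSup_eq
    rw [Finset.sum_congr rfl hΦi]
    have hsplit : (∑ i, ((2*m*(eDot φ (s i)) - l₂)^2/(4*(1+m)) - m*(eDot φ (s i))^2))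
        = (4*m^2*(∑ i, (eDot φ (s i))^2) - 4*m*l₂*(∑ i, eDot φ (s i))
            + (N:ℝ)*l₂^2)/(4*(1+m)) - m*(∑ i, (eDot φ (s i))^2) := by
      calc (∑ i, ((2*m*(eDot φ (s i)) - l₂)^2/(4*(1+m)) - m*(eDot φ (s i))^2))
          = ∑ i, ((4*m^2*(eDot φ (s i))^2 - 4*m*l₂*(eDot φ (s i)) + l₂^2)/(4*(1+m))
              - m*(eDot φ (s i))^2) :=
            Finset.sum_congr rfl fun i _ => by rw [show (2*m*(eDot φ (s i)) - l₂)^2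
              = 4*m^2*(eDot φ (s i))^2 - 4*m*l₂*(eDot φ (s i)) + l₂^2 by ring]
        _ = (∑ i, (4*m^2*(eDot φ (s i))^2 - 4*m*l₂*(eDot φ (s i)) + l₂^2))/(4*(1+m))
              - m*(∑ i, (eDot φ (s i))^2) := by
            rw [Finset.sum_sub_distrib, ← Finset.sum_div, ← Finset.mul_sum]
        _ = _ := by
            rw [Finset.sum_add_distrib, Finset.sum_sub_distrib, ← Finset.mul_sum,
              ← Finset.mul_sum, Finset.sum_const, Finset.card_univ, Fintype.card_fin,
              nsmul_eq_mul]
    rw [hsplit, hCeq, hVeq, hμ]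
    field_simp
    ring
  -- set up square roots
  have hV0 : 0 ≤ V := mul_nonneg (by positivity) (Finset.sum_nonneg fun i _ => sq_nonneg _)
  have hD0 : (0:ℝ) ≤ δ*nsq - C^2 := by linarith
  set sv : ℝ := Real.sqrt V with hsvdef
  set sd : ℝ := Real.sqrt (δ*nsq - C^2) with hsddef
  have hsv : sv^2 = V := Real.sq_sqrt hV0
  have hsd : sd^2 = δ*nsq - C^2 := Real.sq_sqrt hD0
  have hsv0 : 0 ≤ sv := Real.sqrt_nonneg _
  have hsd0 : 0 ≤ sd := Real.sqrt_nonneg _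
  set A := { y | ∃ l₁ l₂ : ℝ, 0 ≤ l₁ ∧
      y = l₁ * δ + l₂ * α + (N : ℝ)⁻¹ * ∑ i, Φ l₁ l₂ (s i) } with hA
  set T : ℝ := -α ^ 2 - (max (sv - sd) 0) ^ 2 with hT
  have hlb : ∀ y ∈ A, T ≤ y := by
    rintro y ⟨l₁, l₂, hl₁, rfl⟩
    have hl : l₁ = (l₁/nsq) * nsq := by field_simp
    set m : ℝ := l₁/nsq with hmdef
    have hm : 0 ≤ m := div_nonneg hl₁ hns.le
    have h1m : (0:ℝ) < 1 + m := by linarith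
    rw [show l₁ * δ + l₂ * α + (N : ℝ)⁻¹ * ∑ i, Φ l₁ l₂ (s i)
        = (m*nsq)*δ + l₂*α + (N:ℝ)⁻¹ * ∑ i, Φ (m*nsq) l₂ (s i) by rw [← hl],
      hkey m hm l₂]
    have hq : 0 ≤ (l₂ - (2*m*μbar - 2*(1+m)*α))^2/(4*(1+m)) :=
      div_nonneg (sq_nonneg _) (by linarith)
    rcases le_total sv sd with h | h
    · rw [hT, max_eq_right (by linarith)]
      have hVD : V ≤ δ*nsq - C^2 := by nlinarith [pow_le_pow_left₀ hsv0 h 2, hsv, hsd]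
      have h2 : m*V/(1+m) ≤ m*(δ*nsq - C^2) := by
        rw [div_le_iff₀ h1m]
        nlinarith [mul_le_mul_of_nonneg_left hVD hm, mul_nonneg (mul_nonneg hm hD0) hm]
      linarith
    · rw [hT, max_eq_left (by linarith)]
      have h2 : m*V/(1+m) ≤ m*(δ*nsq - C^2) + (sv-sd)^2 := by
        rw [div_le_iff₀ h1m, ← hsv, ← hsd]
        nlinarith [sq_nonneg (m*sd - (sv-sd))]
      linarith
  have hne : A.Nonempty := ⟨_, 0, 0, le_rfl, rfl⟩
  have hbdd : BddBelow A := ⟨T, hlb⟩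
  have hub : ∀ ε : ℝ, 0 < ε → sInf A ≤ T + ε := by
    intro ε hε
    have aux : ∀ m : ℝ, 0 ≤ m →
        sInf A ≤ -α^2 + m*(δ*nsq - C^2) - m*V/(1+m) := by
      intro m hm
      have hmem : (m*nsq) * δ + (2*m*μbar - 2*(1+m)*α) * α
          + (N:ℝ)⁻¹ * ∑ i, Φ (m*nsq) (2*m*μbar - 2*(1+m)*α) (s i) ∈ A :=
        ⟨m*nsq, 2*m*μbar - 2*(1+m)*α, mul_nonneg hm hns.le, rfl⟩
      have := csInf_le hbdd hmem
      rw [show (m*nsq) * δ + (2*m*μbar - 2*(1+m)*α) * α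
          + (N:ℝ)⁻¹ * ∑ i, Φ (m*nsq) (2*m*μbar - 2*(1+m)*α) (s i)
          = (m*nsq) * δ + (2*m*μbar - 2*(1+m)*α) * α
          + (N:ℝ)⁻¹ * ∑ i, Φ (m*nsq) (2*m*μbar - 2*(1+m)*α) (s i) from rfl,
        hkey m hm (2*m*μbar - 2*(1+m)*α)] at this
      simpa using this
    rcases le_total sv sd with h | h
    · have := aux 0 le_rfl
      rw [hT, max_eq_right (by linarith)]
      simp at this
      linarith
    · rcases eq_or_lt_of_le hsd0 with hsd' | hsdpos
      · -- sd = 0 : take m = V/ε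
        have hDzero : δ*nsq - C^2 = 0 := by rw [← hsd, ← hsd']; ring
        set m : ℝ := V/ε with hm'
        have hm : 0 ≤ m := div_nonneg hV0 hε.le
        have h1m : (0:ℝ) < 1 + m := by linarith
        have hεm : ε * m = V := by rw [hm']; field_simp
        have h3 : V - ε ≤ m*V/(1+m) := by
          rw [le_div_iff₀ h1m]
          nlinarith [hεm]
        have h4 := aux m hm
        rw [hDzero] at h4
        rw [hT, max_eq_left (by linarith), hsd'.symm, sub_zero, hsv]
        nlinarith [h4, h3]
      · -- 0 < sd ≤ sv : take m = sv/sd - 1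
        set m : ℝ := sv/sd - 1 with hm'
        have hm : 0 ≤ m := by
          rw [hm', sub_nonneg, le_div_iff₀ hsdpos, one_mul]; exact h
        have hsvpos : 0 < sv := lt_of_lt_of_le hsdpos h
        have hval : m*(δ*nsq - C^2) - m*V/(1+m) = -(sv-sd)^2 := by
          rw [← hsv, ← hsd, hm']
          rw [show 1 + (sv/sd - 1) = sv/sd by ring]
          field_simp
          ring
        have := aux m hm
        rw [hT, max_eq_left (by linarith)]
        linarith [this, hval]
  refine le_antisymm ?_ (le_csInf hne hlb)
  have : ∀ ε : ℝ, 0 < ε → sInf A ≤ T + ε := hub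
  exact le_of_forall_pos_le_add this
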